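/- The number of Callan sequences of size k × n equals the poly-Bernoulli number B_n^{(-k)} = ∑_{m=0}^{min(n,k)} (m!)^2 S(n+1,m+1) S(k+1,m+1), where S denotes Stirling numbers of the second kind. -/

import Mathlib

open Finset

/-- Stirling numbers of the second kind. -/
def stirling2 : ℕ → ℕ → ℕ
  | 0, 0 => 1
  | 0, _ + 1 => 0
  | _ + 1, 0 => 0
  | n + 1, j + 1 => (j + 1) * stirling2 n (j + 1) + stirling2 n j

/-- Genocchi numbers, via `G n = 2 (1 - 2^n) B n`. -/
def genocchi (n : ℕ) : ℚ := 2 * (1 - 2 ^ n) * bernoulli n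
/-- Blue base set for a `k × n` Callan sequence: `{1, …, k} ∪ {*}`. -/
abbrev Blue (k : ℕ) := Fin k ⊕ Unit

/-- Red base set for a `k × n` Callan sequence: `{1, …, n} ∪ {*}`. -/
abbrev Red (n : ℕ) := Fin n ⊕ Unit

/-- A Callan pair: a blue block together with a red block. -/
abbrev CPair (k n : ℕ) := Finset (Blue k) × Finset (Red n)

/-- A Callan sequence of size `k × n`: a sequence of Callan pairs whose blue (resp. red)
blocks form an ordered partition of the blue (resp. red) base set into nonempty blocks,
with both starred elements in the last (extra) pair. -/
structure CallanSeq (k n : ℕ) where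
  pairs : List (CPair k n)
  ne : pairs ≠ []
  blue_nonempty : ∀ p ∈ pairs, p.1.Nonempty
  red_nonempty : ∀ p ∈ pairs, p.2.Nonempty
  blue_partition : ∀ b : Blue k, ∃! i : Fin pairs.length, b ∈ (pairs.get i).1
  red_partition : ∀ r : Red n, ∃! i : Fin pairs.length, r ∈ (pairs.get i).2
  star_blue : (Sum.inr () : Blue k) ∈ (pairs.getLast ne).1
  star_red : (Sum.inr () : Red n) ∈ (pairs.getLast ne).2

/-- A barred Callan sequence: a Callan sequence with one bar inserted at any position
except the very end, i.e. immediately before one of the pairs. -/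
def BarredCallan (k n : ℕ) := Σ σ : CallanSeq k n, Fin σ.pairs.length

section Aux
open Function

def rangeComplEquiv {α β : Type*} (b : β) :
    {g : α → β // Set.range g = {b}ᶜ} ≃ {h : α → {y : β // y ≠ b} // Surjective h} where
  toFun g := ⟨fun i => ⟨g.1 i, by
      have : g.1 i ∈ Set.range g.1 := Set.mem_range_self i
      rw [g.2] at this; exact this⟩, by
    rintro ⟨y, hy⟩
    have : y ∈ Set.range g.1 := by rw [g.2]; exact hy
    obtain ⟨i, hi⟩ := this
    exact ⟨i, Subtype.ext hi⟩⟩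
  invFun h := ⟨fun i => (h.1 i).1, by
    ext y
    simp only [Set.mem_range, Set.mem_compl_iff, Set.mem_singleton_iff]
    constructor
    · rintro ⟨i, rfl⟩; exact (h.1 i).2
    · intro hy
      obtain ⟨i, hi⟩ := h.2 ⟨y, hy⟩
      exact ⟨i, by rw [hi]⟩⟩
  left_inv g := Subtype.ext rfl
  right_inv h := Subtype.ext (funext fun i => Subtype.ext rfl)

lemma surj_cons_iff {N : ℕ} {β : Type*} (b : β) (g : Fin N → β) :
    Surjective (Fin.cons b g : Fin (N+1) → β) ↔ (Surjective g ∨ Set.range g = {b}ᶜ) := by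
  constructor
  · intro h
    by_cases hs : Surjective g
    · exact Or.inl hs
    · refine Or.inr ?_
      unfold Surjective at hs
      push_neg at hs
      obtain ⟨y0, hy0⟩ := hs
      have hy0b : y0 = b := by
        obtain ⟨i, hi⟩ := h y0
        rcases Fin.eq_zero_or_eq_succ i with rfl | ⟨i', rfl⟩
        · simpa using hi.symm
        · exact absurd (by simpa using hi : g i' = y0) (hy0 i')
      subst hy0b
      ext y
      simp only [Set.mem_range, Set.mem_compl_iff, Set.mem_singleton_iff]
      constructor
      · rintro ⟨i, rfl⟩ rfl
        exact hy0 i rfl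
      · intro hy
        obtain ⟨i, hi⟩ := h y
        rcases Fin.eq_zero_or_eq_succ i with rfl | ⟨i', rfl⟩
        · exact absurd (by simpa using hi.symm) hy
        · exact ⟨i', by simpa using hi⟩
  · rintro (h | h)
    · intro y; obtain ⟨i, hi⟩ := h y; exact ⟨i.succ, by simpa using hi⟩
    · intro y
      by_cases hy : y = b
      · exact ⟨0, by simp [hy]⟩
      · have : y ∈ Set.range g := by rw [h]; exact hy
        obtain ⟨i, hi⟩ := this
        exact ⟨i.succ, by simpa using hi⟩

/-- transfer surjection subtypes along equivs -/
def surjCongr {α α' β β' : Type*} (e : α ≃ α') (e' : β ≃ β') :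
    {f : α → β // Surjective f} ≃ {f : α' → β' // Surjective f} :=
  Equiv.subtypeEquiv (Equiv.arrowCongr e e') (fun f => by
    constructor
    · intro h
      exact e'.surjective.comp (h.comp e.symm.surjective)
    · intro h
      have := (e'.symm.surjective.comp h).comp e.surjective
      convert this using 1
      funext x; simp)

lemma card_surj (N j : ℕ) :
    Nat.card {f : Fin N → Fin j // Surjective f} = j.factorial * stirling2 N j := by
  induction N generalizing j with
  | zero =>
    match j with
    | 0 =>
      rw [stirling2, Nat.factorial_zero, one_mul]
      haveI : Unique {f : Fin 0 → Fin 0 // Surjective f} :=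
        ⟨⟨⟨finZeroElim, fun b => b.elim0⟩⟩, fun g => Subtype.ext (funext fun x => x.elim0)⟩
      exact Nat.card_unique
    | j + 1 =>
      rw [stirling2, mul_zero]
      haveI : IsEmpty {f : Fin 0 → Fin (j+1) // Surjective f} :=
        ⟨fun f => by obtain ⟨x, -⟩ := f.2 0; exact x.elim0⟩
      exact Nat.card_of_isEmpty
  | succ N ih =>
    match j with
    | 0 =>
      rw [stirling2, mul_zero]
      haveI : IsEmpty {f : Fin (N+1) → Fin 0 // Surjective f} := ⟨fun f => (f.1 0).elim0⟩
      exact Nat.card_of_isEmpty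
    | j + 1 =>
      classical
      have key : ∀ b : Fin (j+1),
          Nat.card {g : Fin N → Fin (j+1) // Surjective (Fin.cons b g : Fin (N+1) → _)}
            = (j+1).factorial * stirling2 N (j+1) + j.factorial * stirling2 N j := by
        intro b
        have hdisj : Disjoint (fun g : Fin N → Fin (j+1) => Surjective g)
            (fun g => Set.range g = {b}ᶜ) := by
          intro p hp hq g hg
          have h1 : Surjective g := hp g hg
          have h2 : Set.range g = {b}ᶜ := hq g hg
          have : b ∈ Set.range g := h1 b
          rw [h2] at this
          exact absurd rfl this
        have cardne : Nat.card {y : Fin (j+1) // y ≠ b} = j := by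
          simp [Nat.card_eq_fintype_card]
        have e3 : {y : Fin (j+1) // y ≠ b} ≃ Fin j := by
          apply Fintype.equivFinOfCardEq
          rw [← Nat.card_eq_fintype_card, cardne]
        calc Nat.card {g : Fin N → Fin (j+1) // Surjective (Fin.cons b g : Fin (N+1) → _)}
            = Nat.card {g : Fin N → Fin (j+1) // Surjective g ∨ Set.range g = {b}ᶜ} :=
              Nat.card_congr (Equiv.subtypeEquiv (Equiv.refl _) (fun g => surj_cons_iff b g))
          _ = Nat.card ({g : Fin N → Fin (j+1) // Surjective g} ⊕
                {g : Fin N → Fin (j+1) // Set.range g = {b}ᶜ}) :=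
              Nat.card_congr (subtypeOrEquiv _ _ hdisj)
          _ = (j+1).factorial * stirling2 N (j+1) + j.factorial * stirling2 N j := by
              rw [Nat.card_sum, ih (j+1)]
              congr 1
              calc Nat.card {g : Fin N → Fin (j+1) // Set.range g = {b}ᶜ}
                  = Nat.card {h : Fin N → {y : Fin (j+1) // y ≠ b} // Surjective h} :=
                    Nat.card_congr (rangeComplEquiv b)
                _ = Nat.card {h : Fin N → Fin j // Surjective h} :=
                    Nat.card_congr (surjCongr (Equiv.refl _) e3)
                _ = j.factorial * stirling2 N j := ih j
      calc Nat.card {f : Fin (N+1) → Fin (j+1) // Surjective f}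
          = Nat.card ((b : Fin (j+1)) ×
              {g : Fin N → Fin (j+1) // Surjective (Fin.cons b g : Fin (N+1) → _)}) := by
            apply Nat.card_congr
            apply Equiv.trans ?_ (Equiv.subtypeProdEquivSigmaSubtype
              (fun (b : Fin (j+1)) (g : Fin N → Fin (j+1)) =>
                Surjective (Fin.cons b g : Fin (N+1) → _)))
            apply Equiv.subtypeEquiv (Fin.consEquiv (fun _ => Fin (j+1))).symm
            intro f
            constructor
            · intro hf
              convert hf using 2
              exact (Fin.cons_self_tail f).symm ▸ rfl
            · intro hf
              have : (Fin.cons (f 0) (fun i => f i.succ) : Fin (N+1) → Fin (j+1)) = f := by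
                funext i
                rcases Fin.eq_zero_or_eq_succ i with rfl | ⟨i', rfl⟩ <;> simp
              rwa [show (Fin.consEquiv (fun _ => Fin (j+1))).symm f = (f 0, fun i => f i.succ) from rfl,
                this] at hf
          _ = ∑ b : Fin (j+1), ((j+1).factorial * stirling2 N (j+1) + j.factorial * stirling2 N j) := by
            rw [Nat.card_eq_fintype_card, Fintype.card_sigma]
            apply Finset.sum_congr rfl
            intro b _
            rw [← key b, Nat.card_eq_fintype_card]
          _ = (j+1).factorial * stirling2 (N+1) (j+1) := by
            rw [Finset.sum_const, card_univ, Fintype.card_fin, smul_eq_mul]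
            rw [show stirling2 (N+1) (j+1) = (j + 1) * stirling2 N (j + 1) + stirling2 N j from rfl]
            rw [Nat.factorial_succ]
            ring

def surjStarEquiv {α : Type*} (j : ℕ) (a : α) :
    {f : α → Fin (j+1) // Surjective f ∧ f a = Fin.last j} × Fin (j+1)
      ≃ {f : α → Fin (j+1) // Surjective f} where
  toFun p := ⟨Equiv.swap (Fin.last j) p.2 ∘ p.1.1, (Equiv.swap _ _).surjective.comp p.1.2.1⟩
  invFun g := (⟨Equiv.swap (Fin.last j) (g.1 a) ∘ g.1,
    ⟨(Equiv.swap _ _).surjective.comp g.2, by simp [Equiv.swap_apply_right]⟩⟩, g.1 a)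
  left_inv p := by
    obtain ⟨⟨f, hf, hfa⟩, v⟩ := p
    have hga : (Equiv.swap (Fin.last j) v ∘ f) a = v := by simp [hfa]
    refine Prod.ext (Subtype.ext ?_) hga
    simp only [hga]
    funext x
    simp [Equiv.swap_apply_self]
  right_inv g := by
    refine Subtype.ext ?_
    funext x
    simp [Equiv.swap_apply_self]

lemma card_surjStar {α : Type*} [Fintype α] (j : ℕ) (a : α) :
    Nat.card {f : α → Fin (j+1) // Surjective f ∧ f a = Fin.last j}
      = j.factorial * stirling2 (Fintype.card α) (j+1) := by
  have h1 : Nat.card ({f : α → Fin (j+1) // Surjective f ∧ f a = Fin.last j} × Fin (j+1))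
      = Nat.card {f : α → Fin (j+1) // Surjective f} := Nat.card_congr (surjStarEquiv j a)
  rw [Nat.card_prod, Nat.card_eq_fintype_card (α := Fin (j+1)), Fintype.card_fin] at h1
  have h2 : Nat.card {f : α → Fin (j+1) // Surjective f}
      = (j+1).factorial * stirling2 (Fintype.card α) (j+1) := by
    rw [Nat.card_congr (surjCongr (Fintype.equivFin α) (Equiv.refl (Fin (j+1)))), card_surj]
  have h3 := h1.trans h2
  rw [Nat.factorial_succ, mul_assoc] at h3
  exact Nat.eq_of_mul_eq_mul_right (Nat.succ_pos j) (h3.trans (mul_comm _ _))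

namespace CallanTmp
variable {k n : ℕ}

lemma CallanSeq.ext' {σ τ : CallanSeq k n} (h : σ.pairs = τ.pairs) : σ = τ := by
  cases σ; cases τ
  simp only at h
  subst h
  rfl

/-- the data type for a Callan sequence -/
abbrev CData (k n : ℕ) :=
  Σ m : Fin (min n k + 1),
    {f : Blue k → Fin (↑m + 1) // Surjective f ∧ f (Sum.inr ()) = Fin.last ↑m} ×
    {g : Red n → Fin (↑m + 1) // Surjective g ∧ g (Sum.inr ()) = Fin.last ↑m}

section mk
variable (m : ℕ) (f : Blue k → Fin (m+1)) (g : Red n → Fin (m+1))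

def blocks : List (CPair k n) :=
  List.ofFn (fun i : Fin (m+1) =>
    (univ.filter (fun b => f b = i), univ.filter (fun r => g r = i)))

lemma blocks_length : (blocks (k := k) (n := n) m f g).length = m + 1 :=
  List.length_ofFn

lemma blocks_get (i : Fin (blocks (k := k) (n := n) m f g).length) :
    (blocks m f g).get i =
      (univ.filter (fun b => f b = Fin.cast (blocks_length m f g) i),
       univ.filter (fun r => g r = Fin.cast (blocks_length m f g) i)) :=
  List.get_ofFn _ i

lemma blocks_getElem (i : ℕ) (h : i < (blocks (k := k) (n := n) m f g).length) :
    (blocks m f g)[i] =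
      (univ.filter (fun b => f b = ⟨i, by rwa [blocks_length m f g] at h⟩),
       univ.filter (fun r => g r = ⟨i, by rwa [blocks_length m f g] at h⟩)) :=
  List.getElem_ofFn h

def mkSeq (hf : Surjective f ∧ f (Sum.inr ()) = Fin.last m)
    (hg : Surjective g ∧ g (Sum.inr ()) = Fin.last m) : CallanSeq k n where
  pairs := blocks m f g
  ne := by
    apply List.ne_nil_of_length_pos
    rw [blocks_length]; omega
  blue_nonempty := by
    intro p hp
    rw [blocks, List.mem_ofFn] at hp
    obtain ⟨i, rfl⟩ := hp
    obtain ⟨b, hb⟩ := hf.1 i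
    exact ⟨b, by simp [hb]⟩
  red_nonempty := by
    intro p hp
    rw [blocks, List.mem_ofFn] at hp
    obtain ⟨i, rfl⟩ := hp
    obtain ⟨r, hr⟩ := hg.1 i
    exact ⟨r, by simp [hr]⟩
  blue_partition := by
    intro b
    refine ⟨Fin.cast (blocks_length m f g).symm (f b), ?_, ?_⟩
    · simp only [blocks_get]
      simp
    · intro i hi
      rw [blocks_get] at hi
      simp only [mem_filter, mem_univ, true_and] at hi
      apply Fin.ext
      have := congrArg Fin.val hi
      simpa using this.symm
  red_partition := by
    intro r
    refine ⟨Fin.cast (blocks_length m f g).symm (g r), ?_, ?_⟩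
    · simp only [blocks_get]
      simp
    · intro i hi
      rw [blocks_get] at hi
      simp only [mem_filter, mem_univ, true_and] at hi
      apply Fin.ext
      have := congrArg Fin.val hi
      simpa using this.symm
  star_blue := by
    have hlen : (blocks (k := k) (n := n) m f g).length - 1 < (blocks (k := k) (n := n) m f g).length := by
      rw [blocks_length]; omega
    rw [List.getLast_eq_getElem, blocks_getElem]
    simp only [mem_filter, mem_univ, true_and]
    rw [hf.2]
    apply Fin.ext
    simp [blocks_length]
  star_red := by
    have hlen : (blocks (k := k) (n := n) m f g).length - 1 < (blocks (k := k) (n := n) m f g).length := by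
      rw [blocks_length]; omega
    rw [List.getLast_eq_getElem, blocks_getElem]
    simp only [mem_filter, mem_univ, true_and]
    rw [hg.2]
    apply Fin.ext
    simp [blocks_length]

end mk

def bwd (x : CData k n) : CallanSeq k n :=
  mkSeq ↑x.1 x.2.1.1 x.2.2.1 x.2.1.2 x.2.2.2

section extract
variable (σ : CallanSeq k n)

noncomputable def idxB (b : Blue k) : Fin σ.pairs.length := (σ.blue_partition b).choose

lemma idxB_mem (b : Blue k) : b ∈ (σ.pairs.get (idxB σ b)).1 :=
  (σ.blue_partition b).choose_spec.1

lemma idxB_eq {b : Blue k} {i : Fin σ.pairs.length} (h : b ∈ (σ.pairs.get i).1) :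
    i = idxB σ b :=
  (σ.blue_partition b).choose_spec.2 i h

lemma idxB_surj : Surjective (idxB σ) := by
  intro i
  obtain ⟨b, hb⟩ := σ.blue_nonempty (σ.pairs.get i) (σ.pairs.get_mem i)
  exact ⟨b, (idxB_eq σ hb).symm⟩

noncomputable def idxR (r : Red n) : Fin σ.pairs.length := (σ.red_partition r).choose

lemma idxR_mem (r : Red n) : r ∈ (σ.pairs.get (idxR σ r)).2 :=
  (σ.red_partition r).choose_spec.1

lemma idxR_eq {r : Red n} {i : Fin σ.pairs.length} (h : r ∈ (σ.pairs.get i).2) :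
    i = idxR σ r :=
  (σ.red_partition r).choose_spec.2 i h

lemma idxR_surj : Surjective (idxR σ) := by
  intro i
  obtain ⟨r, hr⟩ := σ.red_nonempty (σ.pairs.get i) (σ.pairs.get_mem i)
  exact ⟨r, (idxR_eq σ hr).symm⟩

lemma len_pos : 0 < σ.pairs.length := List.length_pos_iff.mpr σ.ne

lemma len_le_blue : σ.pairs.length ≤ k + 1 := by
  have := Fintype.card_le_of_surjective _ (idxB_surj σ)
  simpa using this

lemma len_le_red : σ.pairs.length ≤ n + 1 := by
  have := Fintype.card_le_of_surjective _ (idxR_surj σ)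
  simpa using this

lemma idxB_star : (idxB σ (Sum.inr ())).val = σ.pairs.length - 1 := by
  have h : σ.pairs.length - 1 < σ.pairs.length := by have := len_pos σ; omega
  have hmem : (Sum.inr () : Blue k) ∈ (σ.pairs.get ⟨σ.pairs.length - 1, h⟩).1 := by
    have := σ.star_blue
    rwa [List.getLast_eq_getElem, ← List.get_eq_getElem (l := σ.pairs) (i := ⟨σ.pairs.length - 1, h⟩)] at this
  exact (congrArg Fin.val (idxB_eq σ hmem)).symm

lemma idxR_star : (idxR σ (Sum.inr ())).val = σ.pairs.length - 1 := by
  have h : σ.pairs.length - 1 < σ.pairs.length := by have := len_pos σ; omega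
  have hmem : (Sum.inr () : Red n) ∈ (σ.pairs.get ⟨σ.pairs.length - 1, h⟩).2 := by
    have := σ.star_red
    rwa [List.getLast_eq_getElem, ← List.get_eq_getElem (l := σ.pairs) (i := ⟨σ.pairs.length - 1, h⟩)] at this
  exact (congrArg Fin.val (idxR_eq σ hmem)).symm

lemma len_cast : σ.pairs.length = (σ.pairs.length - 1) + 1 := by
  have := len_pos σ; omega

noncomputable def fwd : CData k n :=
  ⟨⟨σ.pairs.length - 1, by
      have h1 := len_le_blue σ; have h2 := len_le_red σ
      have := len_pos σ
      omega⟩,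
   ⟨Fin.cast (len_cast σ) ∘ idxB σ,
    ⟨((finCongr (len_cast σ)).surjective).comp (idxB_surj σ), by
      apply Fin.ext
      simpa using idxB_star σ⟩⟩,
   ⟨Fin.cast (len_cast σ) ∘ idxR σ,
    ⟨((finCongr (len_cast σ)).surjective).comp (idxR_surj σ), by
      apply Fin.ext
      simpa using idxR_star σ⟩⟩⟩

lemma bwd_fwd : bwd (fwd σ) = σ := by
  apply CallanSeq.ext'
  show blocks (σ.pairs.length - 1) (Fin.cast (len_cast σ) ∘ idxB σ)
      (Fin.cast (len_cast σ) ∘ idxR σ) = σ.pairs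
  apply List.ext_get
  · rw [blocks_length]
    exact (len_cast σ).symm
  intro i h1 h2
  rw [blocks_get]
  have hv : ∀ j : Fin _, (Fin.cast (blocks_length (σ.pairs.length - 1)
      (Fin.cast (len_cast σ) ∘ idxB σ) (Fin.cast (len_cast σ) ∘ idxR σ)) j).val = j.val :=
    fun j => rfl
  refine Prod.ext ?_ ?_
  · ext b
    simp only [mem_filter, mem_univ, true_and, comp_apply]
    constructor
    · intro hb
      have : idxB σ b = ⟨i, h2⟩ := by
        apply Fin.ext
        have := congrArg Fin.val hb
        simpa using this
      rw [← this]
      exact idxB_mem σ b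
    · intro hb
      have := idxB_eq σ hb
      apply Fin.ext
      have := congrArg Fin.val this
      simpa using this.symm
  · ext r
    simp only [mem_filter, mem_univ, true_and, comp_apply]
    constructor
    · intro hr
      have : idxR σ r = ⟨i, h2⟩ := by
        apply Fin.ext
        have := congrArg Fin.val hr
        simpa using this
      rw [← this]
      exact idxR_mem σ r
    · intro hr
      have := idxR_eq σ hr
      apply Fin.ext
      have := congrArg Fin.val this
      simpa using this.symm

end extract

lemma bwd_inj : Injective (bwd (k := k) (n := n)) := by
  rintro ⟨m1, ⟨f1, hf1⟩, ⟨g1, hg1⟩⟩ ⟨m2, ⟨f2, hf2⟩, ⟨g2, hg2⟩⟩ h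
  have hp : blocks (↑m1) f1 g1 = blocks (↑m2) f2 g2 := congrArg CallanSeq.pairs h
  have hm : (m1 : ℕ) = (m2 : ℕ) := by
    have := congrArg List.length hp
    rw [blocks_length, blocks_length] at this
    omega
  have hm' : m1 = m2 := Fin.ext hm
  subst hm'
  have key : ∀ (i : Fin ((m1 : ℕ) + 1)),
      ((univ.filter (fun b => f1 b = i) : Finset (Blue k)),
        (univ.filter (fun r => g1 r = i) : Finset (Red n)))
      = (univ.filter (fun b => f2 b = i), univ.filter (fun r => g2 r = i)) := by
    intro i
    have hlt : (i : ℕ) < (blocks (k := k) (n := n) (↑m1) f1 g1).length := by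
      rw [blocks_length]; exact i.isLt
    have h1 : (blocks (k := k) (n := n) (↑m1) f1 g1)[(i : ℕ)]'hlt
        = (blocks (k := k) (n := n) (↑m1) f2 g2)[(i : ℕ)]'(hp ▸ hlt) :=
      List.getElem_of_eq hp hlt
    rw [blocks_getElem, blocks_getElem] at h1
    simpa using h1
  have hf : f1 = f2 := by
    funext b
    have := key (f1 b)
    have h2 : (univ.filter (fun b' => f1 b' = f1 b) : Finset (Blue k))
        = univ.filter (fun b' => f2 b' = f1 b) := congrArg Prod.fst this
    have hb : b ∈ univ.filter (fun b' => f2 b' = f1 b) := by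
      rw [← h2]
      simp
    simpa using (mem_filter.mp hb).2.symm
  have hg : g1 = g2 := by
    funext r
    have := key (g1 r)
    have h2 : (univ.filter (fun r' => g1 r' = g1 r) : Finset (Red n))
        = univ.filter (fun r' => g2 r' = g1 r) := congrArg Prod.snd this
    have hr : r ∈ univ.filter (fun r' => g2 r' = g1 r) := by
      rw [← h2]
      simp
    simpa using (mem_filter.mp hr).2.symm
  subst hf; subst hg; rfl

end CallanTmp
end Aux

open CallanTmp Function in
/-- The number of Callan sequences of size `k × n` equals the poly-Bernoulli number
`B_n^{(-k)} = ∑_{m=0}^{min(n,k)} (m!)^2 S(n+1,m+1) S(k+1,m+1)`. -/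
theorem card_callanSeq (k n : ℕ) :
    Nat.card (CallanSeq k n)
      = ∑ m ∈ Finset.range (min n k + 1),
          (m.factorial) ^ 2 * stirling2 (n + 1) (m + 1) * stirling2 (k + 1) (m + 1) := by
  have hbij : Bijective (bwd (k := k) (n := n)) :=
    ⟨bwd_inj, fun σ => ⟨fwd σ, bwd_fwd σ⟩⟩
  rw [← Nat.card_eq_of_bijective _ hbij, Nat.card_eq_fintype_card, Fintype.card_sigma,
    ← Fin.sum_univ_eq_sum_range]
  apply Finset.sum_congr rfl
  intro m _
  rw [Fintype.card_prod, ← Nat.card_eq_fintype_card, ← Nat.card_eq_fintype_card,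
    card_surjStar, card_surjStar]
  have hb : Fintype.card (Blue k) = k + 1 := by simp
  have hr : Fintype.card (Red n) = n + 1 := by simp
  rw [hb, hr]
  ring
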